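/- Let γ ∈ GL_{N+1}(𝔽_q), regarded as a k̄-linear automorphism of k̄^{N+1}. If V and W are two proper γ-invariant subspaces with exp V = exp W, then either V ∩ W = 0 or V = W. (Geometrically: two proper γ-invariant linear subvarieties of ℙ^N(k̄) of the same exponent are either disjoint or coincident.) -/
import Mathlib


/-- The `k̄`-linear endomorphism of `k̄^m` induced by a matrix
`γ ∈ GL_m(𝔽_q)` via base extension. -/
noncomputable def matEnd (k : Type*) [Field k] [Fintype k] (m : ℕ)
    (γ : Matrix.GeneralLinearGroup (Fin m) k) :
    Module.End (AlgebraicClosure k) (Fin m → AlgebraicClosure k) :=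
  Matrix.mulVecLin
    ((γ : Matrix (Fin m) (Fin m) k).map (algebraMap k (AlgebraicClosure k)))

/-- `V` is a `γ`-invariant subspace: `γ(V) = V`. -/
def IsInvt (k : Type*) [Field k] [Fintype k] (m : ℕ)
    (γ : Matrix.GeneralLinearGroup (Fin m) k)
    (V : Submodule (AlgebraicClosure k) (Fin m → AlgebraicClosure k)) : Prop :=
  Submodule.map (matEnd k m γ) V = V

/-- The exponent of `V`: the least `e ≥ 1` such that `γ^e` acts on `V` as
multiplication by a scalar. -/
noncomputable def expV (k : Type*) [Field k] [Fintype k] (m : ℕ)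
    (γ : Matrix.GeneralLinearGroup (Fin m) k)
    (V : Submodule (AlgebraicClosure k) (Fin m → AlgebraicClosure k)) : ℕ :=
  sInf {e : ℕ | 1 ≤ e ∧ ∃ c : AlgebraicClosure k,
    ∀ v ∈ V, (matEnd k m γ ^ e) v = c • v}

/-- `V` is a proper `γ`-invariant subspace: `V` is nonzero, `γ`-invariant,
and every `γ`-invariant subspace strictly containing `V` has strictly larger
exponent. -/
def IsProper (k : Type*) [Field k] [Fintype k] (m : ℕ)
    (γ : Matrix.GeneralLinearGroup (Fin m) k)
    (V : Submodule (AlgebraicClosure k) (Fin m → AlgebraicClosure k)) : Prop :=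
  V ≠ ⊥ ∧ IsInvt k m γ V ∧
    ∀ W : Submodule (AlgebraicClosure k) (Fin m → AlgebraicClosure k),
      W ≠ ⊥ → IsInvt k m γ W → V < W → expV k m γ V < expV k m γ W


lemma matEnd_pow (k : Type*) [Field k] [Fintype k] (m : ℕ)
    (γ : Matrix.GeneralLinearGroup (Fin m) k) (n : ℕ) :
    matEnd k m γ ^ n =
      Matrix.mulVecLin (((γ : Matrix (Fin m) (Fin m) k) ^ n).map
        (algebraMap k (AlgebraicClosure k))) := by
  induction n with
  | zero =>
      simp [Matrix.map_one]
      rfl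
  | succ n ih =>
      rw [pow_succ, ih, pow_succ, Matrix.map_mul, Matrix.mulVecLin_mul]
      rfl

lemma expV_mem (k : Type*) [Field k] [Fintype k] (m : ℕ)
    (γ : Matrix.GeneralLinearGroup (Fin m) k)
    (V : Submodule (AlgebraicClosure k) (Fin m → AlgebraicClosure k)) :
    1 ≤ expV k m γ V ∧ ∃ c : AlgebraicClosure k,
      ∀ v ∈ V, (matEnd k m γ ^ expV k m γ V) v = c • v := by
  have : expV k m γ V ∈ {e : ℕ | 1 ≤ e ∧ ∃ c : AlgebraicClosure k,
      ∀ v ∈ V, (matEnd k m γ ^ e) v = c • v} := by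
    apply Nat.sInf_mem
    refine ⟨orderOf γ, ⟨orderOf_pos γ, 1, ?_⟩⟩
    intro v hv
    rw [matEnd_pow, ← Units.val_pow_eq_pow_val, pow_orderOf_eq_one]
    simp [Matrix.map_one]
  exact this
/-- Two proper `γ`-invariant subspaces of `k̄^{N+1}` with the same exponent
are either disjoint (intersection `0`) or coincident. -/
theorem stmt15 (k : Type*) [Field k] [Fintype k] (N : ℕ)
    (γ : Matrix.GeneralLinearGroup (Fin (N + 1)) k)
    (V W : Submodule (AlgebraicClosure k) (Fin (N + 1) → AlgebraicClosure k))
    (hV : IsProper k (N + 1) γ V) (hW : IsProper k (N + 1) γ W)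
    (hexp : expV k (N + 1) γ V = expV k (N + 1) γ W) :
    V ⊓ W = ⊥ ∨ V = W := by
  by_cases h0 : V ⊓ W = ⊥
  · exact Or.inl h0
  right
  obtain ⟨hV0, hVinv, hVmax⟩ := hV
  obtain ⟨hW0, hWinv, hWmax⟩ := hW
  obtain ⟨he1, c, hc⟩ := expV_mem k (N + 1) γ V
  obtain ⟨he1', c', hc'⟩ := expV_mem k (N + 1) γ W
  set e := expV k (N + 1) γ V with he
  rw [← hexp] at hc' he1'
  -- find a nonzero common vector
  obtain ⟨x, hx, hx0⟩ := Submodule.exists_mem_ne_zero_of_ne_bot h0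
  have hcc : c = c' := by
    have h1 := hc x (Submodule.mem_inf.mp hx).1
    have h2 := hc' x (Submodule.mem_inf.mp hx).2
    have : c • x = c' • x := by rw [← h1, ← h2]
    exact smul_left_injective _ hx0 this
  subst hcc
  -- γ^e acts as scalar c on V ⊔ W
  have hsup : ∀ u ∈ V ⊔ W, (matEnd k (N + 1) γ ^ e) u = c • u := by
    intro u hu
    obtain ⟨v, hv, w, hw, rfl⟩ := Submodule.mem_sup.mp hu
    rw [map_add, hc v hv, hc' w hw, smul_add]
  have hle : expV k (N + 1) γ (V ⊔ W) ≤ e := Nat.sInf_le ⟨he1, c, hsup⟩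
  have hsupinv : IsInvt k (N + 1) γ (V ⊔ W) := by
    unfold IsInvt at hVinv hWinv ⊢
    rw [Submodule.map_sup, hVinv, hWinv]
  have hsup0 : V ⊔ W ≠ ⊥ := fun h => hV0 (le_bot_iff.mp (h ▸ le_sup_left))
  have hVeq : V = V ⊔ W := by
    rcases lt_or_eq_of_le (le_sup_left : V ≤ V ⊔ W) with h | h
    · exact absurd (lt_of_lt_of_le (hVmax _ hsup0 hsupinv h) hle) (lt_irrefl e)
    · exact h
  have hWeq : W = V ⊔ W := by
    rcases lt_or_eq_of_le (le_sup_right : W ≤ V ⊔ W) with h | h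
    · have := hWmax _ hsup0 hsupinv h
      rw [← hexp] at this
      exact absurd (lt_of_lt_of_le this hle) (lt_irrefl e)
    · exact h
  exact hVeq.trans hWeq.symm
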